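/- Let A be an N×N {0,1}-matrix with no zero rows, and ρ : X̄_A → X_A the factor map from the two-sided to the one-sided Markov shift. The induced map H^A → H̄^A, [ξ] ↦ [ξ∘ρ], is a group isomorphism carrying the positive cone H^A_+ = {[ξ] | ∃ ξ' ≥ 0 with [ξ]=[ξ']} onto H̄^A_+. -/

import Mathlib

/-- The one-sided topological Markov shift of a matrix `A`. -/
def oneSided {N : ℕ} (A : Matrix (Fin N) (Fin N) ℕ) : Set (ℕ → Fin N) :=
  {x | ∀ n, A (x n) (x (n + 1)) = 1}

/-- The two-sided topological Markov shift of a matrix `A`. -/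
def twoSided {N : ℕ} (A : Matrix (Fin N) (Fin N) ℕ) : Set (ℤ → Fin N) :=
  {x | ∀ n : ℤ, A (x n) (x (n + 1)) = 1}

/-- The one-sided shift map on `X_A`. -/
def sigmaS {N : ℕ} (A : Matrix (Fin N) (Fin N) ℕ) (x : oneSided A) : oneSided A :=
  ⟨fun n => x.1 (n + 1), fun n => x.2 (n + 1)⟩

/-- The two-sided shift map on `X̄_A`. -/
def sigmaBarS {N : ℕ} (A : Matrix (Fin N) (Fin N) ℕ) (x : twoSided A) : twoSided A :=
  ⟨fun n => x.1 (n + 1), fun n => by simpa [add_assoc] using x.2 (n + 1)⟩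

/-- The factor map `ρ : X̄_A → X_A`, restriction to positive coordinates. -/
def rhoS {N : ℕ} (A : Matrix (Fin N) (Fin N) ℕ) (x : twoSided A) : oneSided A :=
  ⟨fun n => x.1 ((n : ℤ) + 1), fun n => by
    have h := x.2 ((n : ℤ) + 1)
    convert h using 3
    simp only [Nat.cast_add, Nat.cast_one]⟩


lemma continuous_sigmaS {N : ℕ} (A : Matrix (Fin N) (Fin N) ℕ) :
    Continuous (sigmaS A) := by
  apply Continuous.subtype_mk
  exact continuous_pi fun n => (continuous_apply (n + 1)).comp continuous_subtype_val

lemma continuous_sigmaBarS {N : ℕ} (A : Matrix (Fin N) (Fin N) ℕ) :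
    Continuous (sigmaBarS A) := by
  apply Continuous.subtype_mk
  exact continuous_pi fun n => (continuous_apply (n + 1)).comp continuous_subtype_val

lemma continuous_rhoS {N : ℕ} (A : Matrix (Fin N) (Fin N) ℕ) :
    Continuous (rhoS A) := by
  apply Continuous.subtype_mk
  exact continuous_pi fun n => (continuous_apply ((n : ℤ) + 1)).comp continuous_subtype_val

/-- The coboundary homomorphism `ξ ↦ ξ - ξ ∘ σ_A` on `C(X_A, ℤ)`. -/
noncomputable def cobOne {N : ℕ} (A : Matrix (Fin N) (Fin N) ℕ) :
    C(oneSided A, ℤ) →+ C(oneSided A, ℤ) :=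
  AddMonoidHom.mk' (fun ξ => ξ - ξ.comp ⟨sigmaS A, continuous_sigmaS A⟩)
    (by intro f g; ext x; simp [ContinuousMap.comp]; ring)

/-- The coboundary homomorphism `ζ ↦ ζ - ζ ∘ σ̄_A` on `C(X̄_A, ℤ)`. -/
noncomputable def cobTwo {N : ℕ} (A : Matrix (Fin N) (Fin N) ℕ) :
    C(twoSided A, ℤ) →+ C(twoSided A, ℤ) :=
  AddMonoidHom.mk' (fun ζ => ζ - ζ.comp ⟨sigmaBarS A, continuous_sigmaBarS A⟩)
    (by intro f g; ext x; simp [ContinuousMap.comp]; ring)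

/-- The ordered cohomology group `H^A` of the one-sided shift. -/
noncomputable def HOne {N : ℕ} (A : Matrix (Fin N) (Fin N) ℕ) :=
  C(oneSided A, ℤ) ⧸ (cobOne A).range

/-- The ordered cohomology group `H̄^A` of the two-sided shift. -/
noncomputable def HTwo {N : ℕ} (A : Matrix (Fin N) (Fin N) ℕ) :=
  C(twoSided A, ℤ) ⧸ (cobTwo A).range

noncomputable instance {N : ℕ} (A : Matrix (Fin N) (Fin N) ℕ) :
    AddCommGroup (HOne A) := QuotientAddGroup.Quotient.addCommGroup _

noncomputable instance {N : ℕ} (A : Matrix (Fin N) (Fin N) ℕ) :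
    AddCommGroup (HTwo A) := QuotientAddGroup.Quotient.addCommGroup _

/-- The positive cone `H^A_+`. -/
def posConeOne {N : ℕ} (A : Matrix (Fin N) (Fin N) ℕ) : Set (HOne A) :=
  {c | ∃ ξ : C(oneSided A, ℤ), (∀ x, 0 ≤ ξ x) ∧ QuotientAddGroup.mk ξ = c}

/-- The positive cone `H̄^A_+`. -/
def posConeTwo {N : ℕ} (A : Matrix (Fin N) (Fin N) ℕ) : Set (HTwo A) :=
  {c | ∃ ζ : C(twoSided A, ℤ), (∀ x, 0 ≤ ζ x) ∧ QuotientAddGroup.mk ζ = c}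



section Aux

lemma myIsClosed_oneSided {N : ℕ} (A : Matrix (Fin N) (Fin N) ℕ) :
    IsClosed (oneSided A) := by
  have : oneSided A = ⋂ n : ℕ,
      (fun x : ℕ → Fin N => (x n, x (n+1))) ⁻¹' {p : Fin N × Fin N | A p.1 p.2 = 1} := by
    ext x; simp [oneSided, Set.mem_iInter]
  rw [this]
  exact isClosed_iInter fun n =>
    (isClosed_discrete _).preimage ((continuous_apply n).prodMk (continuous_apply (n+1)))

lemma myIsClosed_twoSided {N : ℕ} (A : Matrix (Fin N) (Fin N) ℕ) :
    IsClosed (twoSided A) := by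
  have : twoSided A = ⋂ n : ℤ,
      (fun x : ℤ → Fin N => (x n, x (n+1))) ⁻¹' {p : Fin N × Fin N | A p.1 p.2 = 1} := by
    ext x; simp [twoSided, Set.mem_iInter]
  rw [this]
  exact isClosed_iInter fun n =>
    (isClosed_discrete _).preimage ((continuous_apply n).prodMk (continuous_apply (n+1)))

noncomputable instance {N : ℕ} (A : Matrix (Fin N) (Fin N) ℕ) : CompactSpace (oneSided A) :=
  isCompact_iff_compactSpace.mp (myIsClosed_oneSided A).isCompact

noncomputable instance {N : ℕ} (A : Matrix (Fin N) (Fin N) ℕ) : CompactSpace (twoSided A) :=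
  isCompact_iff_compactSpace.mp (myIsClosed_twoSided A).isCompact

lemma exists_finset_window {ι κ : Type*} [TopologicalSpace κ] [DiscreteTopology κ]
    {S : Set (ι → κ)} [CompactSpace S] (f : C(S, ℤ)) :
    ∃ I : Finset ι, ∀ x y : S, (∀ i ∈ I, x.1 i = y.1 i) → f x = f y := by
  have key : ∀ x : S, ∃ I : Finset ι, ∀ y : S, (∀ i ∈ I, y.1 i = x.1 i) → f y = f x := by
    intro x
    have hopen : IsOpen (f ⁻¹' {f x}) := (isOpen_discrete _).preimage f.continuous
    rw [isOpen_induced_iff] at hopen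
    obtain ⟨V, hV, hVeq⟩ := hopen
    have hxV : x.1 ∈ V := by
      have : x ∈ Subtype.val ⁻¹' V := by rw [hVeq]; exact rfl
      exact this
    obtain ⟨I, u, hu, hsub⟩ := isOpen_pi_iff.mp hV x.1 hxV
    refine ⟨I, fun y hy => ?_⟩
    have hyV : y.1 ∈ V := hsub (fun i hi => by
      have := (hu i hi).2
      simpa [hy i hi] using this)
    have : y ∈ f ⁻¹' {f x} := by rw [← hVeq]; exact hyV
    simpa using this
  classical
  choose I hI using key
  have hopen : ∀ x : S, IsOpen {y : S | ∀ i ∈ I x, y.1 i = x.1 i} := by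
    intro x
    have heq : {y : S | ∀ i ∈ I x, y.1 i = x.1 i} =
        ⋂ i ∈ I x, (fun y : S => y.1 i) ⁻¹' {x.1 i} := by
      ext y; simp
    rw [heq]
    exact isOpen_biInter_finset fun i _ =>
      (isOpen_discrete _).preimage ((continuous_apply i).comp continuous_subtype_val)
  have hcover : (Set.univ : Set S) ⊆ ⋃ x : S, {y : S | ∀ i ∈ I x, y.1 i = x.1 i} :=
    fun x _ => Set.mem_iUnion.mpr ⟨x, fun i _ => rfl⟩
  obtain ⟨t, ht⟩ := isCompact_univ.elim_finite_subcover _ hopen hcover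
  refine ⟨t.sup I, fun x y hxy => ?_⟩
  obtain ⟨x₀, hx₀t, hx₀⟩ : ∃ x₀ ∈ t, ∀ i ∈ I x₀, x.1 i = x₀.1 i := by
    have := ht (Set.mem_univ x)
    simpa using this
  have hsub : I x₀ ⊆ t.sup I := Finset.le_sup hx₀t
  have hy : ∀ i ∈ I x₀, y.1 i = x₀.1 i := fun i hi => by
    rw [← hxy i (hsub hi)]; exact hx₀ i hi
  rw [hI x₀ x hx₀, hI x₀ y hy]

lemma window_one {N : ℕ} (A : Matrix (Fin N) (Fin N) ℕ) (f : C(oneSided A, ℤ)) :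
    ∃ m : ℕ, ∀ x y : oneSided A, (∀ i ≤ m, x.1 i = y.1 i) → f x = f y := by
  obtain ⟨I, hI⟩ := exists_finset_window f
  exact ⟨I.sup id, fun x y h => hI x y fun i hi => h i (Finset.le_sup (f := id) hi)⟩

lemma window_two {N : ℕ} (A : Matrix (Fin N) (Fin N) ℕ) (f : C(twoSided A, ℤ)) :
    ∃ k : ℕ, ∀ x y : twoSided A, (∀ j : ℤ, |j| ≤ (k : ℤ) → x.1 j = y.1 j) → f x = f y := by
  obtain ⟨I, hI⟩ := exists_finset_window f
  refine ⟨I.sup Int.natAbs, fun x y h => hI x y fun i hi => h i ?_⟩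
  have h2 : i.natAbs ≤ I.sup Int.natAbs := Finset.le_sup hi
  rw [Int.abs_eq_natAbs]
  exact_mod_cast h2

end Aux
section Aux2
variable {N : ℕ} {A : Matrix (Fin N) (Fin N) ℕ}

lemma iter_one_coord (n : ℕ) (x : oneSided A) (i : ℕ) :
    ((sigmaS A)^[n] x).1 i = x.1 (i + n) := by
  induction n generalizing x with
  | zero => rfl
  | succ n ih =>
    rw [Function.iterate_succ_apply, ih]
    show x.1 (i + n + 1) = x.1 (i + (n + 1))
    ring_nf

lemma iter_two_coord (n : ℕ) (z : twoSided A) (j : ℤ) :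
    ((sigmaBarS A)^[n] z).1 j = z.1 (j + n) := by
  induction n generalizing z with
  | zero => simp
  | succ n ih =>
    rw [Function.iterate_succ_apply, ih]
    show z.1 (j + n + 1) = z.1 (j + ((n : ℕ) + 1 : ℕ))
    push_cast
    ring_nf

lemma rho_iter (n : ℕ) (z : twoSided A) :
    rhoS A ((sigmaBarS A)^[n] z) = (sigmaS A)^[n] (rhoS A z) := by
  apply Subtype.ext
  funext i
  show ((sigmaBarS A)^[n] z).1 ((i : ℤ) + 1) = ((sigmaS A)^[n] (rhoS A z)).1 i
  rw [iter_two_coord, iter_one_coord]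
  show z.1 ((i : ℤ) + 1 + n) = z.1 (((i + n : ℕ) : ℤ) + 1)
  push_cast
  ring_nf

lemma continuous_iter_one (n : ℕ) : Continuous ((sigmaS A)^[n]) :=
  (continuous_sigmaS A).iterate n

lemma continuous_iter_two (n : ℕ) : Continuous ((sigmaBarS A)^[n]) :=
  (continuous_sigmaBarS A).iterate n

/-- Factorization through `ρ` for functions depending only on coordinates `1..m`. -/
lemma exists_factor (m : ℕ) (ζ : C(twoSided A, ℤ))
    (hw : ∀ x y : twoSided A, (∀ j : ℤ, 1 ≤ j → j ≤ (m : ℤ) → x.1 j = y.1 j) → ζ x = ζ y) :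
    ∃ ξ : C(oneSided A, ℤ), (∀ z, ξ (rhoS A z) = ζ z) ∧
      ((∀ z, 0 ≤ ζ z) → ∀ x, 0 ≤ ξ x) := by
  classical
  set F : (Fin m → Fin N) → ℤ := fun w =>
    if h : ∃ z : twoSided A, ∀ k : Fin m, z.1 ((k : ℤ) + 1) = w k then ζ h.choose else 0
    with hF
  have hcont1 : Continuous (fun x : oneSided A => (fun k : Fin m => x.1 (k : ℕ))) :=
    continuous_pi fun k => (continuous_apply (k : ℕ)).comp continuous_subtype_val
  have hcontF : Continuous F := continuous_of_discreteTopology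
  refine ⟨⟨fun x => F (fun k => x.1 k), hcontF.comp hcont1⟩, ?_, ?_⟩
  · intro z
    show F (fun k => (rhoS A z).1 k) = ζ z
    have hex : ∃ z' : twoSided A, ∀ k : Fin m, z'.1 ((k : ℤ) + 1) = (rhoS A z).1 k :=
      ⟨z, fun k => rfl⟩
    rw [hF]
    simp only [dif_pos hex]
    apply hw
    intro j hj1 hjm
    have hspec := hex.choose_spec
    have hk : ∃ k : Fin m, (k : ℤ) + 1 = j := by
      refine ⟨⟨(j - 1).toNat, by omega⟩, ?_⟩
      simp; omega
    obtain ⟨k, hk⟩ := hk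
    rw [← hk, hspec k]
    rfl
  · intro hpos x
    show (0 : ℤ) ≤ F (fun k => x.1 k)
    by_cases h : ∃ z : twoSided A, ∀ k : Fin m, z.1 ((k : ℤ) + 1) = x.1 (k : ℕ)
    · rw [hF]; simp only [dif_pos h]; exact hpos _
    · rw [hF]; simp only [dif_neg h]; exact le_refl 0

/-- Every point of `X_A`, shifted `N` times, is in the range of `ρ`. -/
lemma exists_rho_preimage (x : oneSided A) :
    ∃ z : twoSided A, rhoS A z = (sigmaS A)^[N] x := by
  classical
  -- pigeonhole on x.1 restricted to Fin (N+1)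
  have hN : 0 < N := Fin.pos (x.1 0)
  obtain ⟨a, b, hne, hab⟩ : ∃ a b : Fin (N + 1), a ≠ b ∧ x.1 a = x.1 b := by
    obtain ⟨a, b, hne, h⟩ := Fintype.exists_ne_map_eq_of_card_lt
      (fun k : Fin (N + 1) => x.1 k) (by simp)
    exact ⟨a, b, hne, h⟩
  -- wlog a < b
  obtain ⟨a', b', hlt, hble, heq⟩ : ∃ a' b' : ℕ, a' < b' ∧ b' ≤ N ∧ x.1 a' = x.1 b' := by
    rcases lt_or_gt_of_ne hne with h | h
    · exact ⟨a, b, h, Nat.lt_succ_iff.mp b.isLt, hab⟩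
    · exact ⟨b, a, h, Nat.lt_succ_iff.mp a.isLt, hab.symm⟩
  set p : ℤ := (b' : ℤ) - a' with hp
  have hppos : 0 < p := by omega
  set e : ℤ → ℕ := fun i => if (a' : ℤ) ≤ i then i.toNat else a' + ((i - a') % p).toNat
    with he
  have hmod : ∀ i : ℤ, 0 ≤ (i - a') % p ∧ (i - a') % p < p := fun i =>
    ⟨Int.emod_nonneg _ (by omega), Int.emod_lt_of_pos _ hppos⟩
  -- edge property of e
  have hedge : ∀ i : ℤ, A (x.1 (e i)) (x.1 (e (i + 1))) = 1 := by
    intro i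
    by_cases hi : (a' : ℤ) ≤ i
    · have hi1 : (a' : ℤ) ≤ i + 1 := by omega
      have h1 : e i = i.toNat := by simp [he, hi]
      have h2 : e (i + 1) = i.toNat + 1 := by
        simp only [he, if_pos hi1]; omega
      rw [h1, h2]
      exact x.2 i.toNat
    · -- i < a'
      push_neg at hi
      have h1 : e i = a' + ((i - a') % p).toNat := by simp [he, not_le.mpr hi]
      obtain ⟨hr0, hrp⟩ := hmod i
      have hdiv := Int.emod_add_mul_ediv (i - a') p
      have hmod1 : (i + 1 - a') % p = ((i - a') % p + 1) % p := by
        rw [show i + 1 - a' = ((i - a') % p + 1) + p * ((i - a') / p) by omega]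
        exact Int.add_mul_emod_self_left _ _ _
      by_cases hcase : (i - a') % p + 1 < p
      · -- next index within the cycle
        have h2 : e (i + 1) = a' + ((i - a') % p).toNat + 1 := by
          by_cases hi1 : (a' : ℤ) ≤ i + 1
          · -- then i + 1 = a', so (i - a') % p + 1 = p... contradiction? no:
            -- i + 1 = a' means (i - a') % p = (-1) % p = p - 1, so hcase false
            have hia : i - (a' : ℤ) = -1 := by omega
            have : (i - a') % p = p - 1 := by
              rw [hia, show (-1 : ℤ) = (p - 1) + p * (-1) by ring,
                Int.add_mul_emod_self_left (p - 1) p (-1), Int.emod_eq_of_lt (by omega) (by omega)]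
            omega
          · simp only [he, if_neg hi1, hmod1]
            rw [Int.emod_eq_of_lt (by omega) (by omega)]
            omega
        rw [h1, h2]
        exact x.2 (a' + ((i - a') % p).toNat)
      · -- wrap around: (i - a') % p = p - 1, e i = b' - 1, e (i+1) = a'
        have hr : (i - a') % p = p - 1 := by omega
        have h2 : e (i + 1) = a' := by
          by_cases hi1 : (a' : ℤ) ≤ i + 1
          · simp only [he, if_pos hi1]
            omega
          · simp only [he, if_neg hi1, hmod1, hr]
            simp
        have hb1 : a' + (p - 1 : ℤ).toNat = b' - 1 := by omega
        have hb : b' - 1 + 1 = b' := by omega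
        have h3 := x.2 (b' - 1)
        rw [hb] at h3
        rw [h1, h2, hr, hb1, heq]
        exact h3
  -- construct z
  refine ⟨⟨fun j => x.1 (e (j + N - 1)), fun j => by
    have := hedge (j + N - 1)
    convert this using 3
    ring_nf⟩, ?_⟩
  apply Subtype.ext
  funext n
  show x.1 (e ((n : ℤ) + 1 + N - 1)) = ((sigmaS A)^[N] x).1 n
  rw [iter_one_coord]
  have : e ((n : ℤ) + 1 + N - 1) = n + N := by
    rw [he]
    simp only []
    rw [if_pos (by omega)]
    omega
  rw [this]

end Aux2
section Aux3
variable {N : ℕ} (A : Matrix (Fin N) (Fin N) ℕ)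

/-- `ρ` as a continuous map. -/
noncomputable def rhoC : C(twoSided A, oneSided A) := ⟨rhoS A, continuous_rhoS A⟩

/-- Composition with `ρ` as an additive homomorphism. -/
noncomputable def compRho : C(oneSided A, ℤ) →+ C(twoSided A, ℤ) :=
  AddMonoidHom.mk' (fun ξ => ξ.comp (rhoC A)) (by intro f g; ext z; simp [ContinuousMap.comp])

variable {A}

lemma rho_sigma (z : twoSided A) :
    rhoS A (sigmaBarS A z) = sigmaS A (rhoS A z) := by
  simpa using rho_iter (A := A) 1 z

lemma compRho_cob (ξ : C(oneSided A, ℤ)) :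
    compRho A (cobOne A ξ) = cobTwo A (compRho A ξ) := by
  ext z
  simp only [compRho, cobOne, cobTwo, AddMonoidHom.mk'_apply, ContinuousMap.sub_apply,
    ContinuousMap.comp_apply, ContinuousMap.coe_mk]
  have : rhoS A (sigmaBarS A z) = sigmaS A (rhoS A z) := rho_sigma z
  show ξ (rhoS A z) - ξ (sigmaS A (rhoS A z)) = ξ (rhoS A z) - ξ (rhoS A (sigmaBarS A z))
  rw [this]

lemma mk_shift (ζ : C(twoSided A, ℤ)) (M : ℕ) :
    ζ - ζ.comp ⟨(sigmaBarS A)^[M], continuous_iter_two M⟩ ∈ (cobTwo A).range := by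
  induction M with
  | zero =>
    have : ζ - ζ.comp ⟨(sigmaBarS A)^[0], continuous_iter_two 0⟩ = 0 := by
      ext z; simp [ContinuousMap.comp]
    rw [this]
    exact zero_mem _
  | succ M ih =>
    have key : ζ - ζ.comp ⟨(sigmaBarS A)^[M+1], continuous_iter_two (M+1)⟩ =
        (ζ - ζ.comp ⟨(sigmaBarS A)^[M], continuous_iter_two M⟩) +
        cobTwo A (ζ.comp ⟨(sigmaBarS A)^[M], continuous_iter_two M⟩) := by
      ext z
      simp only [cobTwo, AddMonoidHom.mk'_apply, ContinuousMap.sub_apply,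
        ContinuousMap.add_apply, ContinuousMap.comp_apply, ContinuousMap.coe_mk]
      rw [Function.iterate_succ_apply]
      ring
    rw [key]
    exact add_mem ih ⟨_, rfl⟩

lemma shifted_window (η : C(twoSided A, ℤ)) (k : ℕ)
    (hk : ∀ x y : twoSided A, (∀ j : ℤ, |j| ≤ (k : ℤ) → x.1 j = y.1 j) → η x = η y) :
    ∀ x y : twoSided A,
      (∀ j : ℤ, 1 ≤ j → j ≤ ((2 * k + 1 : ℕ) : ℤ) →  x.1 j = y.1 j) →
      η.comp ⟨(sigmaBarS A)^[k+1], continuous_iter_two (k+1)⟩ x =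
      η.comp ⟨(sigmaBarS A)^[k+1], continuous_iter_two (k+1)⟩ y := by
  intro x y h
  simp only [ContinuousMap.comp_apply, ContinuousMap.coe_mk]
  apply hk
  intro j hj
  rw [iter_two_coord, iter_two_coord]
  rw [abs_le] at hj
  apply h <;> push_cast <;> omega

/-- Surjectivity (with positivity) core lemma. -/
lemma exists_lift (ζ : C(twoSided A, ℤ)) :
    ∃ ξ : C(oneSided A, ℤ), ξ.comp (rhoC A) - ζ ∈ (cobTwo A).range ∧
      ((∀ z, 0 ≤ ζ z) → ∀ x, 0 ≤ ξ x) := by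
  obtain ⟨k, hk⟩ := window_two A ζ
  set ζ' : C(twoSided A, ℤ) := ζ.comp ⟨(sigmaBarS A)^[k+1], continuous_iter_two (k+1)⟩ with hζ'
  obtain ⟨ξ, hfac, hpos⟩ := exists_factor (2 * k + 1) ζ' (shifted_window ζ k hk)
  have hcomp : ξ.comp (rhoC A) = ζ' := by
    ext z
    exact hfac z
  refine ⟨ξ, ?_, fun h => hpos fun z => h _⟩
  rw [hcomp]
  have := (cobTwo A).range.neg_mem (mk_shift ζ (k+1))
  rw [neg_sub] at this
  exact this

/-- Injectivity core lemma. -/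
lemma inj_core (ξ : C(oneSided A, ℤ))
    (hmem : ξ.comp (rhoC A) ∈ (cobTwo A).range) : ξ ∈ (cobOne A).range := by
  obtain ⟨η, hη⟩ := hmem
  obtain ⟨k, hk⟩ := window_two A η
  set M := k + 1 with hM
  obtain ⟨θ, hθ, -⟩ := exists_factor (2 * k + 1)
    (η.comp ⟨(sigmaBarS A)^[M], continuous_iter_two M⟩) (shifted_window η k hk)
  set ψ : C(oneSided A, ℤ) :=
    θ + ∑ j ∈ Finset.range M, ξ.comp ⟨(sigmaS A)^[j], continuous_iter_one j⟩ with hψ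
  have hpoint : ∀ w : twoSided A, η w - η (sigmaBarS A w) = ξ (rhoS A w) := by
    intro w
    have := congrArg (fun f : C(twoSided A, ℤ) => f w) hη
    simpa [cobTwo, compRho, rhoC, ContinuousMap.comp] using this
  have hψρ : ∀ z : twoSided A, ψ (rhoS A z) = η z := by
    intro z
    rw [hψ]
    simp only [ContinuousMap.add_apply, ContinuousMap.sum_apply, ContinuousMap.comp_apply,
      ContinuousMap.coe_mk]
    have hterm : ∀ j, ξ ((sigmaS A)^[j] (rhoS A z)) =
        η ((sigmaBarS A)^[j] z) - η ((sigmaBarS A)^[j+1] z) := by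
      intro j
      rw [← rho_iter j z, ← hpoint ((sigmaBarS A)^[j] z), Function.iterate_succ_apply']
    rw [Finset.sum_congr rfl fun j _ => hterm j, Finset.sum_range_sub']
    have hθz : θ (rhoS A z) = η ((sigmaBarS A)^[M] z) := hθ z
    rw [hθz]
    simp only [Function.iterate_zero_apply]
    ring
  set h : C(oneSided A, ℤ) := ξ - cobOne A ψ with hh
  have hhρ : ∀ z : twoSided A, h (rhoS A z) = 0 := by
    intro z
    rw [hh]
    simp only [ContinuousMap.sub_apply, cobOne, AddMonoidHom.mk'_apply,
      ContinuousMap.comp_apply, ContinuousMap.coe_mk]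
    have h1 : ψ (sigmaS A (rhoS A z)) = η (sigmaBarS A z) := by
      rw [← rho_sigma z, hψρ (sigmaBarS A z)]
    have h2 : ψ (rhoS A z) = η z := hψρ z
    show ξ (rhoS A z) - (ψ (rhoS A z) - ψ (sigmaS A (rhoS A z))) = 0
    rw [h1, h2, ← hpoint z]
    ring
  have hshift : ∀ x : oneSided A, h ((sigmaS A)^[N] x) = 0 := by
    intro x
    obtain ⟨z, hz⟩ := exists_rho_preimage x
    rw [← hz]
    exact hhρ z
  set g : C(oneSided A, ℤ) :=
    ∑ j ∈ Finset.range N, h.comp ⟨(sigmaS A)^[j], continuous_iter_one j⟩ with hg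
  have hcb : cobOne A g = h := by
    ext x
    simp only [cobOne, AddMonoidHom.mk'_apply, ContinuousMap.sub_apply,
      ContinuousMap.comp_apply, ContinuousMap.coe_mk, hg, ContinuousMap.sum_apply]
    rw [← Finset.sum_sub_distrib]
    have : ∀ j ∈ Finset.range N, h ((sigmaS A)^[j] x) - h ((sigmaS A)^[j] (sigmaS A x)) =
        h ((sigmaS A)^[j] x) - h ((sigmaS A)^[j+1] x) := by
      intro j _
      rw [Function.iterate_succ_apply]
    rw [Finset.sum_congr rfl this, Finset.sum_range_sub']
    simp only [Function.iterate_zero_apply]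
    rw [hshift x]
    ring
  exact ⟨g + ψ, by rw [map_add, hcb, hh]; ring⟩

end Aux3

theorem stmt8 {N : ℕ} (A : Matrix (Fin N) (Fin N) ℕ)
    (hA : ∀ i j, A i j = 0 ∨ A i j = 1)
    (hrows : ∀ i : Fin N, ∃ j : Fin N, A i j = 1) :
    ∃ Φ : HOne A ≃+ HTwo A,
      (∀ ξ : C(oneSided A, ℤ),
        Φ (QuotientAddGroup.mk ξ) =
          QuotientAddGroup.mk (ξ.comp ⟨rhoS A, continuous_rhoS A⟩)) ∧
      Φ '' posConeOne A = posConeTwo A := by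
  classical
  have hle : (cobOne A).range ≤ AddSubgroup.comap (compRho A) (cobTwo A).range := by
    rintro _ ⟨ξ, rfl⟩
    show compRho A (cobOne A ξ) ∈ (cobTwo A).range
    rw [compRho_cob]
    exact ⟨_, rfl⟩
  let Φ0 : HOne A →+ HTwo A :=
    QuotientAddGroup.map (cobOne A).range (cobTwo A).range (compRho A) hle
  have hmk : ∀ ξ : C(oneSided A, ℤ),
      Φ0 (QuotientAddGroup.mk ξ) =
        QuotientAddGroup.mk (ξ.comp ⟨rhoS A, continuous_rhoS A⟩) := fun ξ => rfl
  have hinj : Function.Injective Φ0 := by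
    rw [injective_iff_map_eq_zero]
    intro c hc
    obtain ⟨ξ, rfl⟩ := QuotientAddGroup.mk_surjective c
    rw [hmk ξ] at hc
    change (QuotientAddGroup.mk _ : C(twoSided A, ℤ) ⧸ (cobTwo A).range) = 0 at hc
    rw [QuotientAddGroup.eq_zero_iff] at hc
    change (QuotientAddGroup.mk ξ : C(oneSided A, ℤ) ⧸ (cobOne A).range) = 0
    rw [QuotientAddGroup.eq_zero_iff]
    exact inj_core ξ hc
  have hsurj : Function.Surjective Φ0 := by
    intro c
    obtain ⟨ζ, rfl⟩ := QuotientAddGroup.mk_surjective c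
    obtain ⟨ξ, hmem, -⟩ := exists_lift ζ
    refine ⟨QuotientAddGroup.mk ξ, ?_⟩
    rw [hmk ξ]
    change (QuotientAddGroup.mk _ : C(twoSided A, ℤ) ⧸ (cobTwo A).range) = QuotientAddGroup.mk ζ
    rw [QuotientAddGroup.eq]
    simpa [neg_sub, sub_eq_neg_add, rhoC] using (cobTwo A).range.neg_mem hmem
  refine ⟨AddEquiv.ofBijective Φ0 ⟨hinj, hsurj⟩, fun ξ => hmk ξ, ?_⟩
  ext c
  constructor
  · rintro ⟨c', ⟨ξ, hξpos, rfl⟩, rfl⟩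
    refine ⟨ξ.comp ⟨rhoS A, continuous_rhoS A⟩, fun z => hξpos _, ?_⟩
    exact (hmk ξ).symm
  · rintro ⟨ζ, hζpos, rfl⟩
    obtain ⟨ξ, hmem, hpos⟩ := exists_lift ζ
    refine ⟨QuotientAddGroup.mk ξ, ⟨ξ, hpos hζpos, rfl⟩, ?_⟩
    show Φ0 (QuotientAddGroup.mk ξ) = QuotientAddGroup.mk ζ
    rw [hmk ξ]
    change (QuotientAddGroup.mk _ : C(twoSided A, ℤ) ⧸ (cobTwo A).range) = QuotientAddGroup.mk ζ
    rw [QuotientAddGroup.eq]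
    simpa [neg_sub, sub_eq_neg_add, rhoC] using (cobTwo A).range.neg_mem hmem
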